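/- Let k be a field, let d ≥ 2 be an integer, and let (x, y, z) ∈ k³ be nonzero. Let M be the (d−1) × (d+1) matrix over k with entries M_{i,i} = x, M_{i,i+1} = y, M_{i,i+2} = z for 1 ≤ i ≤ d−1, and all other entries 0. Then M has rank d−1 (its rows are linearly independent). -/
import Mathlib


/-- The banded `(d−1) × (d+1)` matrix with entries `M_{i,i} = x`, `M_{i,i+1} = y`,
`M_{i,i+2} = z` and all other entries `0` has rank `d−1` (its rows are linearly
independent) whenever `(x, y, z) ≠ (0, 0, 0)`. -/
theorem stmt_12 (k : Type*) [Field k] (d : ℕ) (hd : 2 ≤ d)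
    (x y z : k) (hxyz : (x, y, z) ≠ (0, 0, 0))
    (M : Matrix (Fin (d - 1)) (Fin (d + 1)) k)
    (hM : ∀ (i : Fin (d - 1)) (j : Fin (d + 1)),
      M i j = if (j : ℕ) = (i : ℕ) then x
        else if (j : ℕ) = (i : ℕ) + 1 then y
        else if (j : ℕ) = (i : ℕ) + 2 then z
        else 0) :
    M.rank = d - 1 ∧ LinearIndependent k (fun i : Fin (d - 1) => M i) := by
  obtain ⟨n, rfl⟩ : ∃ n, d = n + 2 := ⟨d - 2, by omega⟩
  have hli : LinearIndependent k (fun i : Fin (n + 2 - 1) => M i) := by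
    rw [Fintype.linearIndependent_iff]
    intro g hg
    have h : ∀ j : Fin (n + 2 + 1), ∑ i : Fin (n + 2 - 1), g i * M i j = 0 := by
      intro j
      have := congrFun hg j
      simpa [Finset.sum_apply] using this
    by_cases hx : x ≠ 0
    · -- forward induction using the x entries
      have H : ∀ m : ℕ, ∀ hm : m < n + 2 - 1, g ⟨m, hm⟩ = 0 := by
        intro m
        induction m using Nat.strong_induction_on with
        | _ m IH =>
          intro hm
          have hj := h ⟨m, by omega⟩
          rw [Finset.sum_eq_single (⟨m, hm⟩ : Fin (n + 2 - 1))] at hj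
          · rw [hM] at hj
            simp only [Fin.val_mk, if_pos rfl] at hj
            exact (mul_eq_zero.mp hj).resolve_right hx
          · intro i _ hne
            have hne' : m ≠ (i : ℕ) := fun hc => hne (Fin.ext hc.symm)
            by_cases h1 : m = (i : ℕ) + 1
            · have : g ⟨(i : ℕ), i.isLt⟩ = 0 := IH (i : ℕ) (by omega) i.isLt
              simpa [Fin.eta] using Or.inl this
            · by_cases h2 : m = (i : ℕ) + 2
              · have : g ⟨(i : ℕ), i.isLt⟩ = 0 := IH (i : ℕ) (by omega) i.isLt
                simpa [Fin.eta] using Or.inl this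
              · rw [hM]
                simp [hne', h1, h2]
          · intro hmem; exact absurd (Finset.mem_univ _) hmem
      intro i
      have := H (i : ℕ) i.isLt
      simpa [Fin.eta] using this
    · push_neg at hx
      by_cases hz : z ≠ 0
      · -- backward induction using the z entries
        have H : ∀ c : ℕ, ∀ m : ℕ, ∀ hm : m < n + 2 - 1, n + 1 - m = c → g ⟨m, hm⟩ = 0 := by
          intro c
          induction c using Nat.strong_induction_on with
          | _ c IH =>
            intro m hm hc
            have hj := h ⟨m + 2, by omega⟩
            rw [Finset.sum_eq_single (⟨m, hm⟩ : Fin (n + 2 - 1))] at hj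
            · rw [hM] at hj
              simp only [Fin.val_mk] at hj
              split_ifs at hj <;>
                first | omega | exact (mul_eq_zero.mp hj).resolve_right hz
            · intro i _ hne
              have hne' : (i : ℕ) ≠ m := fun hc' => hne (Fin.ext hc')
              by_cases h1 : (i : ℕ) = m + 1
              · have hlt : m + 1 < n + 2 - 1 := h1 ▸ i.isLt
                have : g ⟨m + 1, hlt⟩ = 0 := IH (n + 1 - (m + 1)) (by omega) (m + 1) hlt rfl
                have hieq : i = ⟨m + 1, hlt⟩ := Fin.ext h1
                rw [hieq, this, zero_mul]
              · by_cases h2 : (i : ℕ) = m + 2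
                · rw [hM]
                  simp only [Fin.val_mk]
                  split_ifs <;> first | omega | simp [hx, hz]
                · rw [hM]
                  simp only [Fin.val_mk]
                  split_ifs <;> first | omega | simp [hx, hz]
            · intro hmem; exact absurd (Finset.mem_univ _) hmem
        intro i
        have := H (n + 1 - (i : ℕ)) (i : ℕ) i.isLt rfl
        simpa [Fin.eta] using this
      · push_neg at hz
        have hy : y ≠ 0 := by
          intro hy
          exact hxyz (by rw [hx, hy, hz])
        intro i
        have hj := h ⟨(i : ℕ) + 1, by omega⟩
        rw [Finset.sum_eq_single i] at hj
        · rw [hM] at hj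
          simp only [Fin.val_mk] at hj
          split_ifs at hj <;>
            first | omega | exact (mul_eq_zero.mp hj).resolve_right hy
        · intro i' _ hne
          have hne' : (i' : ℕ) ≠ (i : ℕ) := fun hc' => hne (Fin.ext hc')
          rw [hM]
          simp only [Fin.val_mk]
          split_ifs <;> first | omega | simp [hx, hz]
        · intro hmem; exact absurd (Finset.mem_univ _) hmem
  refine ⟨?_, hli⟩
  rw [hli.rank_matrix]
  simp
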